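/- arXiv:1312.2469 — 2 statements merged into one kernel-verified Lean document; each statement's English description precedes it below -/
import Mathlib

section
/- Let n ≥ k ≥ 1 and p ≥ 1 be such that A(q) = [n choose k]_q · (1 − q)/(1 − q^p) is a polynomial. Then the sum of the absolute values of the coefficients of A equals (1/p)·C(n,k), where C(n,k) is the ordinary binomial coefficient. Consequently, the ℓ¹-norm of the coefficient sequence of [n choose k]_q · (1 − q) is at most (2/p)·C(n,k). -/
open scoped BigOperators
open Polynomial Finset

/-- The Gaussian (q-)binomial coefficient as a polynomial in `q`. -/
noncomputable def gaussBinom : ℕ → ℕ → Polynomial ℤ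
  | _, 0 => 1
  | 0, _ + 1 => 0
  | n + 1, k + 1 => gaussBinom n k + Polynomial.X ^ (k + 1) * gaussBinom n (k + 1)

/-- triangular numbers -/
def tria : ℕ → ℕ
  | 0 => 0
  | k + 1 => tria k + k

/-- the set of k-subsets of range n -/
noncomputable def Fk (n k : ℕ) : Finset (Finset ℕ) :=
  (Finset.range n).powerset.filter (fun S => S.card = k)

/-- the "subset sum" generating polynomial -/
noncomputable def Gp (n k : ℕ) : Polynomial ℤ :=
  ∑ S ∈ Fk n k, Polynomial.X ^ (S.sum id)

lemma gauss_zero_of_lt : ∀ n k, n < k → gaussBinom n k = 0 := by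
  intro n
  induction n with
  | zero => intro k hk; match k, hk with
    | k + 1, _ => rfl
  | succ n ih =>
    intro k hk
    match k, hk with
    | k + 1, hk =>
      show gaussBinom n k + X ^ (k+1) * gaussBinom n (k+1) = 0
      rw [ih k (by omega), ih (k+1) (by omega)]
      ring

lemma gauss_nil : ∀ n, gaussBinom n 0 = 1 := by
  intro n; cases n <;> rfl

lemma gauss_one : ∀ n, gaussBinom n 1 = ∑ i ∈ range n, (X : Polynomial ℤ) ^ i := by
  intro n
  induction n with
  | zero => simp [gauss_zero_of_lt 0 1 (by omega)]
  | succ n ih =>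
    have d : gaussBinom (n+1) 1 = gaussBinom n 0 + X ^ 1 * gaussBinom n 1 := rfl
    rw [d, gauss_nil, ih, geom_sum_succ]
    ring

lemma gauss_pascal' : ∀ n k, k ≤ n →
    gaussBinom (n+1) (k+1) = gaussBinom n (k+1) + X ^ (n - k) * gaussBinom n k := by
  intro n
  induction n with
  | zero =>
    intro k hk
    interval_cases k
    show gaussBinom 0 0 + X ^ 1 * gaussBinom 0 1 = _
    show (1 : Polynomial ℤ) + X ^ 1 * 0 = 0 + X ^ 0 * 1
    ring
  | succ n ih =>
    intro k hk
    match k with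
    | 0 =>
      have d : gaussBinom (n+2) 1 = gaussBinom (n+1) 0 + X ^ 1 * gaussBinom (n+1) 1 := rfl
      have d0 : gaussBinom (n+1) 0 = 1 := rfl
      rw [d, d0, gauss_one, Nat.sub_zero]
      have h2 : (∑ i ∈ range (n+2), (X : Polynomial ℤ) ^ i)
          = X * ∑ i ∈ range (n+1), X ^ i + 1 := geom_sum_succ
      have h3 : (∑ i ∈ range (n+2), (X : Polynomial ℤ) ^ i)
          = (∑ i ∈ range (n+1), X ^ i) + X ^ (n+1) := Finset.sum_range_succ _ (n+1)
      linear_combination h3 - h2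
    | k + 1 =>
      rcases Nat.lt_or_ge k n with hkn | hkn
      · -- main case k + 1 ≤ n
        have d1 : gaussBinom (n+2) (k+2) = gaussBinom (n+1) (k+1) + X ^ (k+2) * gaussBinom (n+1) (k+2) := rfl
        have d2 : gaussBinom (n+1) (k+2) = gaussBinom n (k+1) + X ^ (k+2) * gaussBinom n (k+2) := rfl
        have d3 : gaussBinom (n+1) (k+1) = gaussBinom n k + X ^ (k+1) * gaussBinom n (k+1) := rfl
        have i1 := ih k (by omega)
        have i2 := ih (k+1) (by omega)
        rw [d1]
        conv_lhs => rw [i1, i2]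
        rw [d2, d3]
        have e1 : n - k = (n - (k+1)) + 1 := by omega
        have e2 : n + 1 - (k + 1) = (n - (k+1)) + 1 := by omega
        rw [e1, e2]
        rw [show n - (k+1) + 1 = (n - (k+1)) + 1 from rfl]
        rw [pow_add, pow_add]
        ring
      · -- boundary k = n
        have hk' : k = n := by omega
        subst hk'
        have d1 : gaussBinom (k+2) (k+2) = gaussBinom (k+1) (k+1) + X ^ (k+2) * gaussBinom (k+1) (k+2) := rfl
        rw [d1, gauss_zero_of_lt (k+1) (k+2) (by omega)]
        simp

lemma Fk_zero (n : ℕ) : Fk n 0 = {∅} := by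
  ext S
  simp only [Fk, mem_filter, Finset.mem_powerset, Finset.card_eq_zero, Finset.mem_singleton]
  constructor
  · rintro ⟨_, h⟩; exact h
  · rintro rfl; simp

lemma Fk_empty (n k : ℕ) (h : n < k) : Fk n k = ∅ := by
  apply Finset.filter_false_of_mem
  intro S hS
  simp only [Finset.mem_powerset] at hS
  have := Finset.card_le_card hS
  simp only [Finset.card_range] at this
  omega

lemma Gp_zero (n : ℕ) : Gp n 0 = 1 := by simp [Gp, Fk_zero]

lemma Gp_empty (n k : ℕ) (h : n < k) : Gp n k = 0 := by simp [Gp, Fk_empty n k h]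

lemma Fk_succ (n k : ℕ) :
    Fk (n+1) (k+1) = Fk n (k+1) ∪ (Fk n k).image (insert n) := by
  classical
  ext S
  simp only [Fk, mem_filter, Finset.mem_powerset, Finset.mem_union, Finset.mem_image,
    Finset.range_add_one]
  constructor
  · rintro ⟨hsub, hcard⟩
    by_cases hn : n ∈ S
    · right
      refine ⟨S.erase n, ⟨?_, ?_⟩, ?_⟩
      · intro a ha
        have h1 := Finset.mem_of_mem_erase ha
        have h2 := Finset.ne_of_mem_erase ha
        have := hsub h1
        rcases Finset.mem_insert.1 this with h | h
        · omega
        · exact h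
      · rw [Finset.card_erase_of_mem hn, hcard]; omega
      · exact Finset.insert_erase hn
      
    · left
      refine ⟨?_, hcard⟩
      intro a ha
      have := hsub ha
      rcases Finset.mem_insert.1 this with h | h
      · subst h; exact absurd ha hn
      · exact h
  · rintro (⟨hsub, hcard⟩ | ⟨T, ⟨hsub, hcard⟩, rfl⟩)
    · exact ⟨hsub.trans (Finset.subset_insert _ _), hcard⟩
    · have hn : n ∉ T := fun h => by
        have := hsub h; simp only [Finset.mem_range] at this; omega
      constructor
      · exact Finset.insert_subset_insert n hsub
      · rw [Finset.card_insert_of_notMem hn, hcard]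

lemma Gp_succ (n k : ℕ) : Gp (n+1) (k+1) = Gp n (k+1) + X ^ n * Gp n k := by
  classical
  have hnotin : ∀ S ∈ Fk n k, n ∉ S := by
    intro S hS
    simp only [Fk, mem_filter, Finset.mem_powerset] at hS
    intro h
    have := hS.1 h; simp only [Finset.mem_range] at this; omega
  have hinj : ∀ S ∈ Fk n k, ∀ T ∈ Fk n k, insert n S = insert n T → S = T := by
    intro S hS T hT hST
    rw [← Finset.erase_insert (hnotin S hS), ← Finset.erase_insert (hnotin T hT), hST]
  have hdisj : Disjoint (Fk n (k+1)) ((Fk n k).image (insert n)) := by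
    rw [Finset.disjoint_left]
    intro S hS hS'
    simp only [Fk, mem_filter, Finset.mem_powerset] at hS
    have hnS : n ∉ S := by
      intro h
      have := hS.1 h; simp only [Finset.mem_range] at this; omega
    simp only [Finset.mem_image] at hS'
    obtain ⟨T, _, rfl⟩ := hS'
    exact hnS (Finset.mem_insert_self n T)
  rw [Gp, Fk_succ, Finset.sum_union hdisj]
  congr 1
  rw [Finset.sum_image hinj, Gp, Finset.mul_sum]
  apply Finset.sum_congr rfl
  intro S hS
  rw [Finset.sum_insert (hnotin S hS)]
  simp only [id_eq]
  rw [pow_add]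

lemma gauss_eq_Gp : ∀ n k, X ^ (tria k) * gaussBinom n k = Gp n k := by
  intro n
  induction n with
  | zero =>
    intro k
    match k with
    | 0 => show X ^ 0 * 1 = Gp 0 0; rw [Gp_zero]; ring
    | k + 1 => show X ^ _ * 0 = Gp 0 (k+1); rw [Gp_empty 0 (k+1) (by omega)]; ring
  | succ n ih =>
    intro k
    match k with
    | 0 => show X ^ 0 * 1 = Gp (n+1) 0; rw [Gp_zero]; ring
    | k + 1 =>
      rcases le_or_gt k n with hkn | hkn
      · rw [gauss_pascal' n k hkn, Gp_succ, ← ih (k+1), ← ih k]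
        have e : tria (k+1) = tria k + k := rfl
        have e2 : tria k + k + (n - k) = n + tria k := by omega
        calc X ^ tria (k+1) * (gaussBinom n (k+1) + X ^ (n-k) * gaussBinom n k)
            = X ^ (tria k + k) * gaussBinom n (k+1)
              + X ^ (tria k + k + (n-k)) * gaussBinom n k := by
              rw [e, pow_add, pow_add]; ring
          _ = X ^ tria (k+1) * gaussBinom n (k+1) + X ^ n * (X ^ tria k * gaussBinom n k) := by
              rw [e, e2, pow_add]; ring
      · rw [gauss_zero_of_lt (n+1) (k+1) (by omega), Gp_empty (n+1) (k+1) (by omega)]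
        ring

noncomputable def cnt (n k j : ℕ) : ℕ := ((Fk n k).filter (fun S => S.sum id = j)).card

lemma Gp_coeff (n k j : ℕ) : (Gp n k).coeff j = (cnt n k j : ℤ) := by
  classical
  rw [Gp, Polynomial.finset_sum_coeff]
  rw [cnt]
  rw [← Finset.sum_boole]
  apply Finset.sum_congr rfl
  intro S _
  rw [Polynomial.coeff_X_pow]
  simp [eq_comm]

lemma Gp_eval_one (n k : ℕ) : (Gp n k).eval 1 = (n.choose k : ℤ) := by
  rw [Gp]
  rw [Polynomial.eval_finset_sum]
  simp only [Polynomial.eval_pow, Polynomial.eval_X, one_pow]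
  rw [Finset.sum_const, nsmul_eq_mul, mul_one]
  congr 1
  rw [Fk, ← powersetCard_eq_filter, Finset.card_powersetCard, Finset.card_range]

lemma gauss_eval_one (n k : ℕ) : (gaussBinom n k).eval 1 = (n.choose k : ℤ) := by
  have := congrArg (Polynomial.eval 1) (gauss_eq_Gp n k)
  simpa [Gp_eval_one] using this

/-! ### symmetry and vanishing of subset-sum counts -/

lemma mem_Fk_iff {n k : ℕ} {S : Finset ℕ} : S ∈ Fk n k ↔ S ⊆ range n ∧ S.card = k := by
  simp [Fk]

lemma cnt_vanish (n k j : ℕ) (h : k * (n-1) < j) : cnt n k j = 0 := by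
  rw [cnt, Finset.card_eq_zero]
  rw [Finset.filter_eq_empty_iff]
  intro S hS
  obtain ⟨hsub, hcard⟩ := mem_Fk_iff.1 hS
  intro hsum
  have hle : S.sum id ≤ k * (n-1) := by
    calc S.sum id ≤ ∑ _i ∈ S, (n-1) := by
          apply Finset.sum_le_sum
          intro i hi
          have := hsub hi
          simp only [Finset.mem_range] at this
          simp only [id_eq]
          omega
      _ = k * (n-1) := by rw [Finset.sum_const, hcard, smul_eq_mul]
  omega

lemma reflect_facts {n k j : ℕ} (hn : 1 ≤ n) {S : Finset ℕ} (h1 : S ⊆ range n)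
    (h2 : S.card = k) (h3 : S.sum id = j) :
    (S.image (fun i => n-1-i)) ⊆ range n ∧ (S.image (fun i => n-1-i)).card = k ∧
    (S.image (fun i => n-1-i)).sum id = k*(n-1) - j ∧
    (S.image (fun i => n-1-i)).image (fun i => n-1-i) = S := by
  have hmem : ∀ i ∈ S, i < n := by
    intro i hi; have := h1 hi; simpa [Finset.mem_range] using this
  have hinj : ∀ a ∈ S, ∀ b ∈ S, n-1-a = n-1-b → a = b := by
    intro a ha b hb hab
    have := hmem a ha; have := hmem b hb; omega
  refine ⟨?_, ?_, ?_, ?_⟩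
  · intro a ha
    simp only [Finset.mem_image] at ha
    obtain ⟨i, hi, rfl⟩ := ha
    simp only [Finset.mem_range]
    omega
  · rw [Finset.card_image_of_injOn, h2]
    intro a ha b hb hab
    exact hinj a ha b hb hab
  · rw [Finset.sum_image hinj]
    have hS' : (∑ i ∈ S, i) = j := by simpa using h3
    have key : (∑ i ∈ S, (n-1-i)) + (∑ i ∈ S, i) = k * (n-1) := by
      calc (∑ i ∈ S, (n-1-i)) + (∑ i ∈ S, i) = ∑ i ∈ S, ((n-1-i) + i) :=
            (Finset.sum_add_distrib).symm
        _ = ∑ _i ∈ S, (n-1) := Finset.sum_congr rfl (fun i hi => by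
            have := hmem i hi; omega)
        _ = k * (n-1) := by rw [Finset.sum_const, h2, smul_eq_mul]
    simp only [id_eq]
    omega
  · rw [Finset.image_image]
    have : ∀ i ∈ S, ((fun i => n-1-i) ∘ (fun i => n-1-i)) i = i := by
      intro i hi
      have := hmem i hi
      simp only [Function.comp_apply]
      omega
    rw [Finset.image_congr (fun i hi => this i hi)]
    exact Finset.image_id

lemma cnt_symm (n k : ℕ) (hn : 1 ≤ n) (j : ℕ) (hj : j ≤ k*(n-1)) :
    cnt n k j = cnt n k (k*(n-1) - j) := by
  classical
  rw [cnt, cnt]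
  apply Finset.card_nbij' (i := fun S => S.image (fun i => n-1-i))
    (j := fun S => S.image (fun i => n-1-i))
  · intro S hS
    simp only [Finset.mem_coe, mem_filter] at hS ⊢
    obtain ⟨hFk, hsum⟩ := hS
    obtain ⟨hsub, hcard⟩ := mem_Fk_iff.1 hFk
    obtain ⟨h1, h2, h3, _⟩ := reflect_facts hn hsub hcard hsum
    exact ⟨mem_Fk_iff.2 ⟨h1, h2⟩, h3⟩
  · intro S hS
    simp only [Finset.mem_coe, mem_filter] at hS ⊢
    obtain ⟨hFk, hsum⟩ := hS
    obtain ⟨hsub, hcard⟩ := mem_Fk_iff.1 hFk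
    obtain ⟨h1, h2, h3, _⟩ := reflect_facts hn hsub hcard hsum
    refine ⟨mem_Fk_iff.2 ⟨h1, h2⟩, ?_⟩
    rw [h3]
    omega
  · intro S hS
    simp only [Finset.mem_coe, mem_filter] at hS
    obtain ⟨hFk, hsum⟩ := hS
    obtain ⟨hsub, hcard⟩ := mem_Fk_iff.1 hFk
    exact (reflect_facts hn hsub hcard hsum).2.2.2
  · intro S hS
    simp only [Finset.mem_coe, mem_filter] at hS
    obtain ⟨hFk, hsum⟩ := hS
    obtain ⟨hsub, hcard⟩ := mem_Fk_iff.1 hFk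
    exact (reflect_facts hn hsub hcard hsum).2.2.2

section Sl2
open Finsupp

abbrev V : Type := Finset ℕ →₀ ℚ

noncomputable def wcoef (n i : ℕ) : ℚ := (i:ℚ) * ((n:ℚ) - (i:ℚ))

def upS (j : ℕ) (S : Finset ℕ) : Finset ℕ := insert (j+1) (S.erase j)
def downS (i : ℕ) (S : Finset ℕ) : Finset ℕ := insert (i-1) (S.erase i)

noncomputable def eVec (n : ℕ) (S : Finset ℕ) : V :=
  ∑ j ∈ S.filter (fun j => j+1 ∉ S ∧ j+1 < n), Finsupp.single (upS j S) (1:ℚ)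
noncomputable def fVec (n : ℕ) (S : Finset ℕ) : V :=
  ∑ i ∈ S.filter (fun i => 0 < i ∧ i-1 ∉ S), (wcoef n i) • Finsupp.single (downS i S) (1:ℚ)

noncomputable def Eop (n : ℕ) : V →ₗ[ℚ] V :=
  Finsupp.lsum ℚ (fun S => LinearMap.toSpanSingleton ℚ V (eVec n S))
noncomputable def Fop (n : ℕ) : V →ₗ[ℚ] V :=
  Finsupp.lsum ℚ (fun S => LinearMap.toSpanSingleton ℚ V (fVec n S))

lemma Eop_single (n : ℕ) (S : Finset ℕ) (a : ℚ) : Eop n (Finsupp.single S a) = a • eVec n S := by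
  simp [Eop, LinearMap.toSpanSingleton_apply]

lemma Fop_single (n : ℕ) (S : Finset ℕ) (a : ℚ) : Fop n (Finsupp.single S a) = a • fVec n S := by
  simp [Fop, LinearMap.toSpanSingleton_apply]

lemma Eop_apply (n : ℕ) (y : V) : Eop n y = y.sum (fun S a => a • eVec n S) := by
  simp [Eop, Finsupp.lsum_apply, LinearMap.toSpanSingleton_apply]
  rfl

lemma Fop_apply (n : ℕ) (y : V) : Fop n y = y.sum (fun S a => a • fVec n S) := by
  simp [Fop, Finsupp.lsum_apply, LinearMap.toSpanSingleton_apply]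
  rfl


lemma upS_downS (S : Finset ℕ) (i : ℕ) (hi : i ∈ S) (h0 : 0 < i) (hm : i-1 ∉ S) :
    upS (i-1) (downS i S) = S := by
  rw [upS, downS]
  have h1 : i - 1 ∉ S.erase i := fun h => hm (Finset.mem_of_mem_erase h)
  rw [Finset.erase_insert h1]
  have h2 : i - 1 + 1 = i := by omega
  rw [h2, Finset.insert_erase hi]

lemma downS_upS (S : Finset ℕ) (j : ℕ) (hj : j ∈ S) (hj1 : j+1 ∉ S) :
    downS (j+1) (upS j S) = S := by
  rw [upS, downS]
  have h1 : j + 1 ∉ S.erase j := fun h => hj1 (Finset.mem_of_mem_erase h)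
  rw [Finset.erase_insert h1]
  have h2 : j + 1 - 1 = j := by omega
  rw [h2, Finset.insert_erase hj]

lemma updown_comm (S : Finset ℕ) (i j : ℕ) (hi : i ∈ S) (hj : j ∈ S) (h0 : 0 < i)
    (hm : i-1 ∉ S) (hj1 : j+1 ∉ S) (hne : j+1 ≠ i-1) (hij : j ≠ i) :
    upS j (downS i S) = downS i (upS j S) := by
  have h1 : i ≠ j + 1 := by
    intro h
    apply hm
    have : i - 1 = j := by omega
    rw [this]; exact hj
  have h2 : i - 1 ≠ j := by
    intro h
    exact hm (h ▸ hj)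
  have h3 : j + 1 ≠ i := fun h => h1 h.symm
  ext a
  simp only [upS, downS, Finset.mem_insert, Finset.mem_erase]
  constructor
  · rintro (rfl | ⟨haj, (h | ⟨hai, haS⟩)⟩)
    · exact Or.inr ⟨h3, Or.inl rfl⟩
    · exact Or.inl h
    · exact Or.inr ⟨hai, Or.inr ⟨haj, haS⟩⟩
  · rintro (rfl | ⟨hai, (h | ⟨haj, haS⟩)⟩)
    · refine Or.inr ⟨h2, Or.inl rfl⟩
    · exact Or.inl h
    · exact Or.inr ⟨haj, Or.inr ⟨hai, haS⟩⟩

lemma eVec_downS (n : ℕ) (S : Finset ℕ) (hS : S ⊆ range n) (i : ℕ)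
    (hi : i ∈ S) (h0 : 0 < i) (hm : i-1 ∉ S) :
    eVec n (downS i S) = Finsupp.single S 1 +
      ∑ j ∈ (S.erase i).filter (fun j => j+1 ∉ S ∧ j+1 ≠ i-1 ∧ j+1 < n),
        Finsupp.single (upS j (downS i S)) (1:ℚ) := by
  classical
  have hin : i < n := by have := hS hi; simpa [Finset.mem_range] using this
  have hset : (downS i S).filter (fun j => j+1 ∉ (downS i S) ∧ j+1 < n)
      = insert (i-1) ((S.erase i).filter (fun j => j+1 ∉ S ∧ j+1 ≠ i-1 ∧ j+1 < n)) := by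
    ext a
    simp only [downS, Finset.mem_filter, Finset.mem_insert, Finset.mem_erase]
    constructor
    · rintro ⟨ha, hb, hc⟩
      rcases ha with rfl | ⟨hne, haS⟩
      · exact Or.inl rfl
      · right
        refine ⟨⟨hne, haS⟩, ?_, ?_, hc⟩
        · intro h
          apply hb
          right
          refine ⟨fun he => ?_, h⟩
          apply hm
          have hai : a = i - 1 := by omega
          rw [← hai]; exact haS
        · intro h
          exact hb (Or.inl h)
    · rintro (rfl | ⟨⟨hne, haS⟩, h1, h2, h3⟩)
      · refine ⟨Or.inl rfl, ?_, by omega⟩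
        rintro (h | ⟨h4, h5⟩)
        · omega
        · exact h4 (by omega)
      · refine ⟨Or.inr ⟨hne, haS⟩, ?_, h3⟩
        rintro (h | ⟨h4, h5⟩)
        · exact h2 h
        · exact h1 h5
  rw [eVec, hset]
  have hnotmem : i - 1 ∉ (S.erase i).filter (fun j => j+1 ∉ S ∧ j+1 ≠ i-1 ∧ j+1 < n) := by
    intro h
    exact hm (Finset.mem_of_mem_erase (Finset.mem_of_mem_filter _ h))
  rw [Finset.sum_insert hnotmem, upS_downS S i hi h0 hm]

lemma fVec_upS (n : ℕ) (S : Finset ℕ) (j : ℕ)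
    (hj : j ∈ S) (hj1 : j+1 ∉ S) (hjn : j+1 < n) :
    fVec n (upS j S) = wcoef n (j+1) • Finsupp.single S 1 +
      ∑ i ∈ (S.erase j).filter (fun i => 0 < i ∧ i-1 ∉ S ∧ i-1 ≠ j+1),
        wcoef n i • Finsupp.single (downS i (upS j S)) (1:ℚ) := by
  classical
  have hset : (upS j S).filter (fun i => 0 < i ∧ i-1 ∉ (upS j S))
      = insert (j+1) ((S.erase j).filter (fun i => 0 < i ∧ i-1 ∉ S ∧ i-1 ≠ j+1)) := by
    ext a
    simp only [upS, Finset.mem_filter, Finset.mem_insert, Finset.mem_erase]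
    constructor
    · rintro ⟨ha, hb, hc⟩
      rcases ha with rfl | ⟨hne, haS⟩
      · exact Or.inl rfl
      · right
        refine ⟨⟨hne, haS⟩, hb, ?_, ?_⟩
        · intro h
          apply hc
          right
          refine ⟨fun he => ?_, h⟩
          apply hj1
          have haj : a = j + 1 := by omega
          rw [← haj]; exact haS
        · intro h
          exact hc (Or.inl h)
    · rintro (rfl | ⟨⟨hne, haS⟩, h1, h2, h3⟩)
      · refine ⟨Or.inl rfl, by omega, ?_⟩
        rintro (h | ⟨h4, h5⟩)
        · omega
        · exact h4 (by omega)
      · refine ⟨Or.inr ⟨hne, haS⟩, h1, ?_⟩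
        rintro (h | ⟨h4, h5⟩)
        · exact h3 h
        · exact h2 h5
  rw [fVec, hset]
  have hnotmem : j + 1 ∉ (S.erase j).filter (fun i => 0 < i ∧ i-1 ∉ S ∧ i-1 ≠ j+1) := by
    intro h
    exact hj1 (Finset.mem_of_mem_erase (Finset.mem_of_mem_filter _ h))
  rw [Finset.sum_insert hnotmem, downS_upS S j hj hj1]

lemma cross_eq (n : ℕ) (S : Finset ℕ) :
    ∑ i ∈ S.filter (fun i => 0 < i ∧ i-1 ∉ S),
      ∑ j ∈ (S.erase i).filter (fun j => j+1 ∉ S ∧ j+1 ≠ i-1 ∧ j+1 < n),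
        wcoef n i • Finsupp.single (upS j (downS i S)) (1:ℚ)
    = ∑ j ∈ S.filter (fun j => j+1 ∉ S ∧ j+1 < n),
      ∑ i ∈ (S.erase j).filter (fun i => 0 < i ∧ i-1 ∉ S ∧ i-1 ≠ j+1),
        wcoef n i • Finsupp.single (downS i (upS j S)) (1:ℚ) := by
  classical
  rw [Finset.sum_sigma', Finset.sum_sigma']
  apply Finset.sum_nbij' (i := fun x => ⟨x.2, x.1⟩) (j := fun x => ⟨x.2, x.1⟩)
  · rintro ⟨i, j⟩ hx
    simp only [Finset.mem_sigma, Finset.mem_filter, Finset.mem_erase] at hx ⊢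
    obtain ⟨⟨hiS, h0, hm⟩, ⟨hji, hjS⟩, hj1, hne, hjn⟩ := hx
    exact ⟨⟨hjS, hj1, hjn⟩, ⟨Ne.symm hji, hiS⟩, h0, hm, fun h => hne h.symm⟩
  · rintro ⟨j, i⟩ hx
    simp only [Finset.mem_sigma, Finset.mem_filter, Finset.mem_erase] at hx ⊢
    obtain ⟨⟨hjS, hj1, hjn⟩, ⟨hij, hiS⟩, h0, hm, hne⟩ := hx
    exact ⟨⟨hiS, h0, hm⟩, ⟨Ne.symm hij, hjS⟩, hj1, fun h => hne h.symm, hjn⟩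
  · rintro ⟨i, j⟩ _; rfl
  · rintro ⟨j, i⟩ _; rfl
  · rintro ⟨i, j⟩ hx
    simp only [Finset.mem_sigma, Finset.mem_filter, Finset.mem_erase] at hx
    obtain ⟨⟨hiS, h0, hm⟩, ⟨hji, hjS⟩, hj1, hne, hjn⟩ := hx
    rw [updown_comm S i j hiS hjS h0 hm hj1 hne hji]

lemma wcoef_zero (n : ℕ) : wcoef n 0 = 0 := by simp [wcoef]

lemma wcoef_n (n : ℕ) : wcoef n n = 0 := by simp [wcoef]

lemma scalar_eq (n : ℕ) (S : Finset ℕ) (hS : S ⊆ range n) :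
    (∑ i ∈ S.filter (fun i => 0 < i ∧ i-1 ∉ S), wcoef n i)
      - (∑ j ∈ S.filter (fun j => j+1 ∉ S ∧ j+1 < n), wcoef n (j+1))
    = ∑ i ∈ S, (2*(i:ℚ) - ((n:ℚ)-1)) := by
  classical
  have hexch : ∑ i ∈ S, (if i+1 ∈ S then wcoef n (i+1) else 0)
      = ∑ i ∈ S, (if (0 < i ∧ i-1 ∈ S) then wcoef n i else 0) := by
    rw [← Finset.sum_filter, ← Finset.sum_filter]
    apply Finset.sum_nbij' (i := fun a => a+1) (j := fun a => a-1)
    · intro a ha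
      simp only [Finset.mem_filter] at ha ⊢
      exact ⟨ha.2, by omega, by simpa using ha.1⟩
    · intro a ha
      simp only [Finset.mem_filter] at ha ⊢
      obtain ⟨haS, h0, hm⟩ := ha
      refine ⟨hm, ?_⟩
      have : a - 1 + 1 = a := by omega
      rw [this]; exact haS
    · intro a _; omega
    · intro a ha
      simp only [Finset.mem_filter] at ha
      omega
    · intro a _; rfl
  rw [Finset.sum_filter, Finset.sum_filter, ← Finset.sum_sub_distrib]
  have key : ∀ i ∈ S, (if (0 < i ∧ i-1 ∉ S) then wcoef n i else 0)
      - (if (i+1 ∉ S ∧ i+1 < n) then wcoef n (i+1) else 0)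
      = ((wcoef n i - wcoef n (i+1))
        - (if (0 < i ∧ i-1 ∈ S) then wcoef n i else 0))
        + (if i+1 ∈ S then wcoef n (i+1) else 0) := by
    intro i hi
    have hin : i < n := by have := hS hi; simpa [Finset.mem_range] using this
    by_cases h1 : 0 < i
    · by_cases h2 : i - 1 ∈ S
      · rw [if_neg (show ¬(0 < i ∧ i-1 ∉ S) by tauto),
          if_pos (show 0 < i ∧ i-1 ∈ S from ⟨h1, h2⟩)]
        by_cases h3 : i + 1 ∈ S
        · rw [if_neg (show ¬(i+1 ∉ S ∧ i+1 < n) by tauto), if_pos h3]; ring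
        · by_cases h4 : i + 1 < n
          · rw [if_pos (show i+1 ∉ S ∧ i+1 < n from ⟨h3, h4⟩), if_neg h3]; ring
          · have hn1 : i + 1 = n := by omega
            rw [if_neg (show ¬(i+1 ∉ S ∧ i+1 < n) by tauto), if_neg h3, hn1, wcoef_n]; ring
      · rw [if_pos (show 0 < i ∧ i-1 ∉ S from ⟨h1, h2⟩),
          if_neg (show ¬(0 < i ∧ i-1 ∈ S) by tauto)]
        by_cases h3 : i + 1 ∈ S
        · rw [if_neg (show ¬(i+1 ∉ S ∧ i+1 < n) by tauto), if_pos h3]; ring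
        · by_cases h4 : i + 1 < n
          · rw [if_pos (show i+1 ∉ S ∧ i+1 < n from ⟨h3, h4⟩), if_neg h3]; ring
          · have hn1 : i + 1 = n := by omega
            rw [if_neg (show ¬(i+1 ∉ S ∧ i+1 < n) by tauto), if_neg h3, hn1, wcoef_n]; ring
    · have hi0 : i = 0 := by omega
      subst hi0
      rw [if_neg (show ¬((0:ℕ) < 0 ∧ 0-1 ∉ S) by tauto),
        if_neg (show ¬((0:ℕ) < 0 ∧ 0-1 ∈ S) by tauto), wcoef_zero]
      by_cases h3 : 0 + 1 ∈ S
      · rw [if_neg (show ¬(0+1 ∉ S ∧ 0+1 < n) by tauto), if_pos h3]; ring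
      · by_cases h4 : 0 + 1 < n
        · rw [if_pos (show 0+1 ∉ S ∧ 0+1 < n from ⟨h3, h4⟩), if_neg h3]; ring
        · have hn1 : 0 + 1 = n := by omega
          rw [if_neg (show ¬(0+1 ∉ S ∧ 0+1 < n) by tauto), if_neg h3, hn1, wcoef_n]; ring
  rw [Finset.sum_congr rfl key, Finset.sum_add_distrib, Finset.sum_sub_distrib, hexch,
    sub_add_cancel]
  apply Finset.sum_congr rfl
  intro i _
  rw [wcoef, wcoef]
  push_cast
  ring

theorem comm_basis (n : ℕ) (S : Finset ℕ) (hS : S ⊆ range n) :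
    Eop n (fVec n S) - Fop n (eVec n S)
      = (∑ i ∈ S, (2*(i:ℚ) - ((n:ℚ)-1))) • Finsupp.single S (1:ℚ) := by
  classical
  have hE : Eop n (fVec n S)
      = (∑ i ∈ S.filter (fun i => 0 < i ∧ i-1 ∉ S), wcoef n i) • Finsupp.single S (1:ℚ)
      + ∑ i ∈ S.filter (fun i => 0 < i ∧ i-1 ∉ S),
          ∑ j ∈ (S.erase i).filter (fun j => j+1 ∉ S ∧ j+1 ≠ i-1 ∧ j+1 < n),
            wcoef n i • Finsupp.single (upS j (downS i S)) (1:ℚ) := by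
    rw [fVec, map_sum]
    have hterm : ∀ i ∈ S.filter (fun i => 0 < i ∧ i-1 ∉ S),
        Eop n (wcoef n i • Finsupp.single (downS i S) (1:ℚ))
        = wcoef n i • Finsupp.single S (1:ℚ)
          + ∑ j ∈ (S.erase i).filter (fun j => j+1 ∉ S ∧ j+1 ≠ i-1 ∧ j+1 < n),
              wcoef n i • Finsupp.single (upS j (downS i S)) (1:ℚ) := by
      intro i hi
      simp only [Finset.mem_filter] at hi
      obtain ⟨hiS, h0, hm⟩ := hi
      rw [map_smul, Eop_single, one_smul, eVec_downS n S hS i hiS h0 hm, smul_add,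
        Finset.smul_sum]
    rw [Finset.sum_congr rfl hterm, Finset.sum_add_distrib, ← Finset.sum_smul]
  have hF : Fop n (eVec n S)
      = (∑ j ∈ S.filter (fun j => j+1 ∉ S ∧ j+1 < n), wcoef n (j+1)) • Finsupp.single S (1:ℚ)
      + ∑ j ∈ S.filter (fun j => j+1 ∉ S ∧ j+1 < n),
          ∑ i ∈ (S.erase j).filter (fun i => 0 < i ∧ i-1 ∉ S ∧ i-1 ≠ j+1),
            wcoef n i • Finsupp.single (downS i (upS j S)) (1:ℚ) := by
    rw [eVec, map_sum]
    have hterm : ∀ j ∈ S.filter (fun j => j+1 ∉ S ∧ j+1 < n),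
        Fop n (Finsupp.single (upS j S) (1:ℚ))
        = wcoef n (j+1) • Finsupp.single S (1:ℚ)
          + ∑ i ∈ (S.erase j).filter (fun i => 0 < i ∧ i-1 ∉ S ∧ i-1 ≠ j+1),
              wcoef n i • Finsupp.single (downS i (upS j S)) (1:ℚ) := by
      intro j hj
      simp only [Finset.mem_filter] at hj
      obtain ⟨hjS, hj1, hjn⟩ := hj
      rw [Fop_single, one_smul, fVec_upS n S j hjS hj1 hjn]
    rw [Finset.sum_congr rfl hterm, Finset.sum_add_distrib, ← Finset.sum_smul]
  rw [hE, hF, cross_eq n S, ← scalar_eq n S hS, sub_smul]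
  abel

/-! ### support predicates -/

def IsSupp (n k σ : ℕ) (y : V) : Prop :=
  ∀ S : Finset ℕ, y S ≠ 0 → S ⊆ range n ∧ S.card = k ∧ S.sum id = σ

lemma eVec_supp {n : ℕ} {S T : Finset ℕ} (h : eVec n S T ≠ 0) :
    ∃ j, j ∈ S ∧ j+1 ∉ S ∧ j+1 < n ∧ T = upS j S := by
  classical
  rw [eVec, Finsupp.finset_sum_apply] at h
  obtain ⟨j, hj, hne⟩ := Finset.exists_ne_zero_of_sum_ne_zero h
  simp only [Finset.mem_filter] at hj
  refine ⟨j, hj.1, hj.2.1, hj.2.2, ?_⟩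
  rw [Finsupp.single_apply] at hne
  by_cases he : upS j S = T
  · exact he.symm
  · rw [if_neg he] at hne; exact absurd rfl hne

lemma fVec_supp {n : ℕ} {S T : Finset ℕ} (h : fVec n S T ≠ 0) :
    ∃ i, i ∈ S ∧ 0 < i ∧ i-1 ∉ S ∧ T = downS i S := by
  classical
  rw [fVec, Finsupp.finset_sum_apply] at h
  obtain ⟨i, hi, hne⟩ := Finset.exists_ne_zero_of_sum_ne_zero h
  simp only [Finset.mem_filter] at hi
  refine ⟨i, hi.1, hi.2.1, hi.2.2, ?_⟩
  rw [Finsupp.smul_apply, Finsupp.single_apply] at hne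
  by_cases he : downS i S = T
  · exact he.symm
  · rw [if_neg he] at hne; simp at hne

lemma upS_props {n k σ : ℕ} {S : Finset ℕ} (hS : S ⊆ range n) (hcard : S.card = k)
    (hsum : S.sum id = σ) {j : ℕ} (hj : j ∈ S) (hj1 : j+1 ∉ S) (hjn : j+1 < n) :
    upS j S ⊆ range n ∧ (upS j S).card = k ∧ (upS j S).sum id = σ + 1 := by
  have hjS' : j+1 ∉ S.erase j := fun h => hj1 (Finset.mem_of_mem_erase h)
  have hpos : 1 ≤ S.card := Finset.card_pos.2 ⟨j, hj⟩
  refine ⟨?_, ?_, ?_⟩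
  · intro a ha
    rcases Finset.mem_insert.1 ha with rfl | h
    · simpa [Finset.mem_range] using hjn
    · exact hS (Finset.mem_of_mem_erase h)
  · rw [upS, Finset.card_insert_of_notMem hjS', Finset.card_erase_of_mem hj]
    omega
  · rw [upS, Finset.sum_insert hjS']
    have h1 := Finset.add_sum_erase S id hj
    have hsum' : (∑ x ∈ S, x) = σ := by simpa using hsum
    simp only [id_eq] at h1 ⊢
    omega

lemma downS_props {n k σ : ℕ} {S : Finset ℕ} (hS : S ⊆ range n) (hcard : S.card = k)
    (hsum : S.sum id = σ) {i : ℕ} (hi : i ∈ S) (h0 : 0 < i) (hm : i-1 ∉ S) :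
    downS i S ⊆ range n ∧ (downS i S).card = k ∧ (downS i S).sum id = σ - 1 ∧ 1 ≤ σ := by
  have hiS' : i-1 ∉ S.erase i := fun h => hm (Finset.mem_of_mem_erase h)
  have hpos : 1 ≤ S.card := Finset.card_pos.2 ⟨i, hi⟩
  have hin : i < n := by have := hS hi; simpa [Finset.mem_range] using this
  have h1 := Finset.add_sum_erase S id hi
  have hsum' : (∑ x ∈ S, x) = σ := by simpa using hsum
  simp only [id_eq] at h1
  have hile : i ≤ σ := by omega
  refine ⟨?_, ?_, ?_, by omega⟩
  · intro a ha
    rcases Finset.mem_insert.1 ha with rfl | h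
    · simp only [Finset.mem_range]; omega
    · exact hS (Finset.mem_of_mem_erase h)
  · rw [downS, Finset.card_insert_of_notMem hiS', Finset.card_erase_of_mem hi]
    omega
  · rw [downS, Finset.sum_insert hiS']
    simp only [id_eq]
    omega


lemma exists_term_E {n : ℕ} {y : V} {T : Finset ℕ} (h : Eop n y T ≠ 0) :
    ∃ S, y S ≠ 0 ∧ eVec n S T ≠ 0 := by
  classical
  rw [Eop_apply, Finsupp.sum, Finsupp.finset_sum_apply] at h
  obtain ⟨S, hS, hne⟩ := Finset.exists_ne_zero_of_sum_ne_zero h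
  refine ⟨S, Finsupp.mem_support_iff.1 hS, ?_⟩
  intro h0
  rw [Finsupp.smul_apply, h0] at hne
  simp at hne

lemma exists_term_F {n : ℕ} {y : V} {T : Finset ℕ} (h : Fop n y T ≠ 0) :
    ∃ S, y S ≠ 0 ∧ fVec n S T ≠ 0 := by
  classical
  rw [Fop_apply, Finsupp.sum, Finsupp.finset_sum_apply] at h
  obtain ⟨S, hS, hne⟩ := Finset.exists_ne_zero_of_sum_ne_zero h
  refine ⟨S, Finsupp.mem_support_iff.1 hS, ?_⟩
  intro h0
  rw [Finsupp.smul_apply, h0] at hne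
  simp at hne

lemma isSupp_E {n k σ : ℕ} {y : V} (h : IsSupp n k σ y) : IsSupp n k (σ+1) (Eop n y) := by
  intro T hT
  obtain ⟨S, hyS, heS⟩ := exists_term_E hT
  obtain ⟨hsub, hcard, hsum⟩ := h S hyS
  obtain ⟨j, hj, hj1, hjn, rfl⟩ := eVec_supp heS
  exact upS_props hsub hcard hsum hj hj1 hjn

lemma isSupp_F {n k σ : ℕ} {y : V} (h : IsSupp n k σ y) : IsSupp n k (σ-1) (Fop n y) := by
  intro T hT
  obtain ⟨S, hyS, hfS⟩ := exists_term_F hT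
  obtain ⟨hsub, hcard, hsum⟩ := h S hyS
  obtain ⟨i, hi, h0, hm, rfl⟩ := fVec_supp hfS
  obtain ⟨a, b, c, _⟩ := downS_props hsub hcard hsum hi h0 hm
  exact ⟨a, b, c⟩

lemma Fop_zero_of_supp0 {n k : ℕ} {y : V} (h : IsSupp n k 0 y) : Fop n y = 0 := by
  classical
  rw [Fop_apply, Finsupp.sum]
  apply Finset.sum_eq_zero
  intro S hS
  obtain ⟨_, _, hsum⟩ := h S (Finsupp.mem_support_iff.1 hS)
  have hfil : S.filter (fun i => 0 < i ∧ i-1 ∉ S) = ∅ := by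
    rw [Finset.filter_eq_empty_iff]
    intro i hiS
    have : id i = 0 := (Finset.sum_eq_zero_iff.1 hsum) i hiS
    simp only [id_eq] at this
    omega
  rw [fVec, hfil, Finset.sum_empty, smul_zero]

/-! ### the commutator on weight spaces -/

lemma comm_supp {n k σ : ℕ} (y : V) (hy : IsSupp n k σ y) :
    Eop n (Fop n y) - Fop n (Eop n y)
      = (2*(σ:ℚ) - (k:ℚ)*((n:ℚ)-1)) • y := by
  classical
  have hrep : y = ∑ S ∈ y.support, Finsupp.single S (y S) := by
    conv_lhs => rw [← Finsupp.sum_single y]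
    rw [Finsupp.sum]
  calc Eop n (Fop n y) - Fop n (Eop n y)
      = ∑ S ∈ y.support, (y S) • (Eop n (fVec n S) - Fop n (eVec n S)) := by
        conv_lhs => rw [hrep]
        rw [map_sum, map_sum, map_sum, map_sum, ← Finset.sum_sub_distrib]
        apply Finset.sum_congr rfl
        intro S _
        rw [Fop_single, Eop_single, map_smul, map_smul, smul_sub]
    _ = ∑ S ∈ y.support, (y S) • ((2*(σ:ℚ) - (k:ℚ)*((n:ℚ)-1)) • Finsupp.single S (1:ℚ)) := by
        apply Finset.sum_congr rfl
        intro S hS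
        obtain ⟨hsub, hcard, hsum⟩ := hy S (Finsupp.mem_support_iff.1 hS)
        rw [comm_basis n S hsub]
        congr 1
        rw [Finset.sum_sub_distrib, Finset.sum_const, hcard]
        have h1 : ∑ i ∈ S, 2*(i:ℚ) = 2*(σ:ℚ) := by
          rw [← Finset.mul_sum]
          congr 1
          rw [← hsum, ← Nat.cast_sum]
          simp
        rw [h1, nsmul_eq_mul]
    _ = (2*(σ:ℚ) - (k:ℚ)*((n:ℚ)-1)) • y := by
        conv_rhs => rw [hrep]
        rw [Finset.smul_sum]
        apply Finset.sum_congr rfl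
        intro S _
        rw [smul_comm, Finsupp.smul_single, smul_eq_mul, mul_one]

lemma Fpow_succ_apply (n : ℕ) (j : ℕ) (x : V) :
    ((Fop n)^(j+1)) x = Fop n (((Fop n)^j) x) := by
  rw [pow_succ']
  rfl

lemma isSupp_Fpow {n k σ : ℕ} (x : V) (hx : IsSupp n k σ x) :
    ∀ j, IsSupp n k (σ-j) (((Fop n)^j) x) := by
  intro j
  induction j with
  | zero => simpa using hx
  | succ j ih =>
    rw [Fpow_succ_apply]
    have h1 := isSupp_F ih
    have h2 : σ - j - 1 = σ - (j+1) := by omega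
    rwa [h2] at h1

lemma EFj {n k σ : ℕ} (x : V) (hx : IsSupp n k σ x) (hE : Eop n x = 0) :
    ∀ j, j ≤ σ → Eop n (((Fop n)^(j+1)) x)
      = (((j:ℚ)+1) * ((2*(σ:ℚ) - (k:ℚ)*((n:ℚ)-1)) - (j:ℚ))) • ((Fop n)^j) x := by
  intro j
  induction j with
  | zero =>
    intro _
    rw [Fpow_succ_apply]
    have hc := comm_supp x hx
    rw [hE, map_zero, sub_zero] at hc
    have h0 : ((Fop n)^0) x = x := by simp
    rw [pow_zero] at *
    simp only [Module.End.one_apply]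
    rw [hc]
    norm_num
  | succ j ih =>
    intro hj1
    have hih := ih (by omega)
    rw [Fpow_succ_apply]
    have hsupp : IsSupp n k (σ-(j+1)) (((Fop n)^(j+1)) x) := isSupp_Fpow x hx (j+1)
    have hc := comm_supp _ hsupp
    have hEz := hih
    have key : Eop n (Fop n (((Fop n)^(j+1)) x))
        = Fop n (Eop n (((Fop n)^(j+1)) x))
          + (2*((σ-(j+1):ℕ):ℚ) - (k:ℚ)*((n:ℚ)-1)) • (((Fop n)^(j+1)) x) := by
      rw [← hc]; abel
    rw [key, hEz, map_smul, ← Fpow_succ_apply]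
    rw [← add_smul]
    congr 1
    have hcast : ((σ-(j+1):ℕ):ℚ) = (σ:ℚ) - ((j:ℚ)+1) := by
      rw [Nat.cast_sub hj1]
      push_cast
      ring
    rw [hcast]
    push_cast
    ring

lemma Einj {n k σ : ℕ} (hneg : 2*(σ:ℚ) < (k:ℚ)*((n:ℚ)-1)) (x : V) (hx : IsSupp n k σ x)
    (hE : Eop n x = 0) : x = 0 := by
  classical
  by_contra hx0
  have hF1 : ((Fop n)^(σ+1)) x = 0 := by
    have h0 : IsSupp n k 0 (((Fop n)^σ) x) := by simpa using isSupp_Fpow x hx σ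
    rw [Fpow_succ_apply]
    exact Fop_zero_of_supp0 h0
  have hex : ∃ t, ((Fop n)^t) x = 0 := ⟨σ+1, hF1⟩
  have htspec : ((Fop n)^(Nat.find hex)) x = 0 := Nat.find_spec hex
  have ht0 : Nat.find hex ≠ 0 := by
    intro h
    rw [h, pow_zero] at htspec
    simp only [Module.End.one_apply] at htspec
    exact hx0 htspec
  have htle : Nat.find hex ≤ σ + 1 := Nat.find_min' hex hF1
  obtain ⟨s, hs⟩ : ∃ s, Nat.find hex = s + 1 := ⟨Nat.find hex - 1, by omega⟩
  have hsσ : s ≤ σ := by omega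
  have hprev : ((Fop n)^s) x ≠ 0 := Nat.find_min hex (show s < Nat.find hex by omega)
  have hEF := EFj x hx hE s hsσ
  rw [← hs, htspec, map_zero] at hEF
  rcases smul_eq_zero.1 hEF.symm with h | h
  · rcases mul_eq_zero.1 h with h1 | h1
    · have : (0:ℚ) < (s:ℚ) + 1 := by positivity
      rw [h1] at this
      exact absurd this (lt_irrefl 0)
    · have hμ : 2*(σ:ℚ) - (k:ℚ)*((n:ℚ)-1) = (s:ℚ) := by linarith [sub_eq_zero.1 h1]
      have : (0:ℚ) ≤ (s:ℚ) := Nat.cast_nonneg s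
      linarith
  · exact hprev h

theorem cnt_mono (n k σ : ℕ) (hn : 1 ≤ n) (h : 2*σ + 1 ≤ k*(n-1)) :
    cnt n k σ ≤ cnt n k (σ+1) := by
  classical
  set T1 : Finset (Finset ℕ) := (Fk n k).filter (fun S => S.sum id = σ) with hT1
  set T2 : Finset (Finset ℕ) := (Fk n k).filter (fun S => S.sum id = σ+1) with hT2
  have hmemT : ∀ (τ : ℕ) (S : Finset ℕ), S ∈ (Fk n k).filter (fun S => S.sum id = τ) ↔
      (S ⊆ range n ∧ S.card = k ∧ S.sum id = τ) := by
    intro τ S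
    rw [Finset.mem_filter, mem_Fk_iff, and_assoc]
  have hW_iff : ∀ (τ : ℕ) (x : V),
      x ∈ Finsupp.supported ℚ ℚ (↑((Fk n k).filter (fun S => S.sum id = τ)) : Set (Finset ℕ))
      ↔ IsSupp n k τ x := by
    intro τ x
    rw [Finsupp.mem_supported']
    constructor
    · intro hx S hS
      have hmem : S ∈ (Fk n k).filter (fun S => S.sum id = τ) := by
        by_contra hmem
        exact hS (hx S (by simpa using hmem))
      exact (hmemT τ S).1 hmem
    · intro hx S hS
      by_contra h0
      exact hS (by simpa using (hmemT τ S).2 (hx S h0))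
  have hmap : ∀ x ∈ Finsupp.supported ℚ ℚ (↑T1 : Set (Finset ℕ)),
      Eop n x ∈ Finsupp.supported ℚ ℚ (↑T2 : Set (Finset ℕ)) := by
    intro x hx
    rw [hT2, hW_iff]
    exact isSupp_E ((hW_iff σ x).1 (by rwa [hT1] at hx))
  set Φ := (Eop n).restrict hmap with hΦ
  have hneg : 2*(σ:ℚ) < (k:ℚ)*((n:ℚ)-1) := by
    have hcast : ((2*σ+1 : ℕ):ℚ) ≤ ((k*(n-1) : ℕ):ℚ) := Nat.cast_le.2 h
    push_cast [Nat.cast_sub hn] at hcast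
    linarith
  have hinj : Function.Injective Φ := by
    intro a b hab
    have h1 : Eop n (a:V) = Eop n (b:V) := by
      have := congrArg (Subtype.val) hab
      simpa [hΦ, LinearMap.restrict_apply] using this
    have h2 : Eop n ((a:V) - (b:V)) = 0 := by
      rw [map_sub, h1, sub_self]
    have hsub : ((a:V) - (b:V)) ∈ Finsupp.supported ℚ ℚ (↑T1 : Set (Finset ℕ)) :=
      Submodule.sub_mem _ a.2 b.2
    have hIs : IsSupp n k σ ((a:V) - (b:V)) := (hW_iff σ _).1 hsub
    have hz := Einj hneg _ hIs h2
    exact Subtype.ext (sub_eq_zero.1 hz)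
  have hcardW : ∀ (T : Finset (Finset ℕ)),
      Module.finrank ℚ (Finsupp.supported ℚ ℚ (↑T : Set (Finset ℕ))) = T.card := by
    intro T
    rw [LinearEquiv.finrank_eq (Finsupp.supportedEquivFinsupp (↑T : Set (Finset ℕ)))]
    rw [Module.finrank_finsupp_self]
    simp
  haveI i1 : Module.Finite ℚ (↥(↑T2 : Set (Finset ℕ)) →₀ ℚ) :=
    Module.Finite.equiv (Finsupp.linearEquivFunOnFinite ℚ ℚ _).symm
  haveI i2 : Module.Finite ℚ (Finsupp.supported ℚ ℚ (↑T2 : Set (Finset ℕ))) :=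
    Module.Finite.equiv (Finsupp.supportedEquivFinsupp (↑T2 : Set (Finset ℕ))).symm
  have hle := LinearMap.finrank_le_finrank_of_injective hinj
  rw [hcardW T1, hcardW T2] at hle
  exact hle

end Sl2

/-! ### ℓ¹-norm lemmas -/

/-- The ℓ¹-norm of an integer polynomial: the sum of the absolute values of its
coefficients. -/
noncomputable def l1normP (P : Polynomial ℤ) : ℤ := ∑ j ∈ P.support, |P.coeff j|

lemma l1_eq_sum_over (P : Polynomial ℤ) (s : Finset ℕ) (h : P.support ⊆ s) :
    l1normP P = ∑ j ∈ s, |P.coeff j| := by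
  apply Finset.sum_subset h
  intro x _ hx
  simp [Polynomial.notMem_support_iff.1 hx]

lemma l1_sub_le (P Q : Polynomial ℤ) : l1normP (P - Q) ≤ l1normP P + l1normP Q := by
  have hsupp : (P - Q).support ⊆ P.support ∪ Q.support := by
    rw [sub_eq_add_neg]
    refine (Polynomial.support_add).trans ?_
    rw [Polynomial.support_neg]
  rw [l1_eq_sum_over (P - Q) (P.support ∪ Q.support) hsupp,
      l1_eq_sum_over P (P.support ∪ Q.support) Finset.subset_union_left,
      l1_eq_sum_over Q (P.support ∪ Q.support) Finset.subset_union_right,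
      ← Finset.sum_add_distrib]
  apply Finset.sum_le_sum
  intro j _
  rw [Polynomial.coeff_sub]
  exact abs_sub _ _

lemma l1_mul_X_pow (P : Polynomial ℤ) (m : ℕ) : l1normP (P * X^m) = l1normP P := by
  rw [l1_eq_sum_over (P * X^m) (P.support.map ⟨fun j => j + m, fun a b h => by simpa using h⟩)]
  · rw [Finset.sum_map]
    apply Finset.sum_congr rfl
    intro j _
    show |(P * X ^ m).coeff (j + m)| = |P.coeff j|
    rw [Polynomial.coeff_mul_X_pow]
  · intro j hj
    have hne := Polynomial.mem_support_iff.1 hj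
    rw [Polynomial.coeff_mul_X_pow'] at hne
    by_cases hm : m ≤ j
    · rw [if_pos hm] at hne
      simp only [Finset.mem_map, Function.Embedding.coeFn_mk]
      exact ⟨j - m, Polynomial.mem_support_iff.2 hne, show j - m + m = j by omega⟩
    · rw [if_neg hm] at hne; exact absurd rfl hne

lemma l1_nonneg_eval (P : Polynomial ℤ) (h : ∀ m, 0 ≤ P.coeff m) : l1normP P = P.eval 1 := by
  rw [Polynomial.eval_eq_sum, Polynomial.sum_def, l1normP]
  apply Finset.sum_congr rfl
  intro j _
  rw [abs_of_nonneg (h j)]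
  simp

/-! ### main theorem -/

/-- If `A(q) = [n choose k]_q (1 − q)/(1 − q^p)` is a polynomial, then the sum of the
absolute values of its coefficients equals `C(n,k)/p`; consequently the ℓ¹-norm of
`[n choose k]_q · (1 − q)` is at most `(2/p)·C(n,k)`. -/
theorem l1norm_gaussBinom_quotient (n k p : ℕ) (hk : 1 ≤ k) (hkn : k ≤ n) (hp : 1 ≤ p)
    (A : Polynomial ℤ)
    (hA : A * (1 - Polynomial.X ^ p) = gaussBinom n k * (1 - Polynomial.X)) :
    (p : ℤ) * l1normP A = (n.choose k : ℤ) ∧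
    (p : ℤ) * l1normP (gaussBinom n k * (1 - Polynomial.X)) ≤ 2 * (n.choose k : ℤ) := by
  have hn1 : 1 ≤ n := le_trans hk hkn
  set K := k * (n - 1) with hK
  set c : ℕ → ℤ := fun j => (cnt n k j : ℤ) with hc
  have cmono : ∀ σ : ℕ, 2*σ < K → c σ ≤ c (σ+1) := by
    intro σ hσ
    simp only [hc]
    exact_mod_cast cnt_mono n k σ hn1 (by omega)
  have cdec : ∀ j : ℕ, K < 2*(j+1) → c (j+1) ≤ c j := by
    intro j hj
    rcases le_or_gt (j+1) K with h1 | h1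
    · have e1 := cnt_symm n k hn1 (j+1) h1
      have e2 := cnt_symm n k hn1 j (by omega)
      have e3 : K - j = (K - (j+1)) + 1 := by omega
      have e4 := cnt_mono n k (K - (j+1)) hn1 (by omega)
      rw [← hK] at e1 e2
      rw [← e3] at e4
      have : cnt n k (j+1) ≤ cnt n k j := by omega
      simp only [hc]
      exact_mod_cast this
    · have hv : cnt n k (j+1) = 0 := cnt_vanish n k _ (by omega)
      simp only [hc, hv, Nat.cast_zero]
      positivity
  -- the shifted polynomial B
  set e := tria k with he
  set B : Polynomial ℤ := X^e * A with hBdef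
  have hBid : B * (1 - X^p) = Gp n k * (1 - X) := by
    calc B * (1 - X^p) = X^e * (A * (1 - X^p)) := by rw [hBdef]; ring
      _ = X^e * (gaussBinom n k * (1 - X)) := by rw [hA]
      _ = (X^e * gaussBinom n k) * (1 - X) := by ring
      _ = Gp n k * (1 - X) := by rw [gauss_eq_Gp]
  -- coefficients of Gp * (1 - X)
  have hd0 : (Gp n k * (1 - X)).coeff 0 = c 0 := by
    have : Gp n k * (1 - X) = Gp n k - Gp n k * X := by ring
    rw [this, Polynomial.coeff_sub, Polynomial.coeff_mul_X_zero, sub_zero, Gp_coeff]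
  have hds : ∀ m : ℕ, (Gp n k * (1 - X)).coeff (m+1) = c (m+1) - c m := by
    intro m
    have : Gp n k * (1 - X) = Gp n k - Gp n k * X := by ring
    rw [this, Polynomial.coeff_sub, Polynomial.coeff_mul_X, Gp_coeff, Gp_coeff]
  -- recurrences for coefficients of B
  have hb_low : ∀ m, m < p → B.coeff m = (Gp n k * (1 - X)).coeff m := by
    intro m hm
    have h1 : (B * (1 - X^p)).coeff m = (Gp n k * (1 - X)).coeff m := by rw [hBid]
    have h2 : B * (1 - X^p) = B - B * X^p := by ring
    rw [h2, Polynomial.coeff_sub, Polynomial.coeff_mul_X_pow', if_neg (by omega), sub_zero] at h1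
    exact h1
  have hb_step : ∀ m, B.coeff (m+p) = B.coeff m + (Gp n k * (1 - X)).coeff (m+p) := by
    intro m
    have h1 : (B * (1 - X^p)).coeff (m+p) = (Gp n k * (1 - X)).coeff (m+p) := by rw [hBid]
    have h2 : B * (1 - X^p) = B - B * X^p := by ring
    rw [h2, Polynomial.coeff_sub, Polynomial.coeff_mul_X_pow', if_pos (by omega)] at h1
    have h3 : m + p - p = m := by omega
    rw [h3] at h1
    omega
  have hdpos : ∀ j : ℕ, 2*j ≤ K+1 → 0 ≤ (Gp n k * (1 - X)).coeff j := by
    intro j hj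
    match j with
    | 0 => rw [hd0]; positivity
    | j+1 =>
      rw [hds]
      have := cmono j (by omega)
      omega
  have hblow : ∀ m : ℕ, 2*m ≤ K + 1 → 0 ≤ B.coeff m := by
    intro m
    induction m using Nat.strong_induction_on with
    | _ m ih =>
      intro h2m
      rcases lt_or_ge m p with hm | hm
      · rw [hb_low m hm]
        exact hdpos m h2m
      · obtain ⟨m', rfl⟩ : ∃ m', m = m' + p := ⟨m - p, by omega⟩
        rw [hb_step m']
        have h1 := ih m' (by omega) (by omega)
        have h2 := hdpos (m'+p) (by omega)
        omega
  have hbhigh_step : ∀ m : ℕ, K + 2 ≤ 2*m → B.coeff (m+p) ≤ B.coeff m := by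
    intro m hm
    rw [hb_step m]
    have h1 : m + p = (m+p-1)+1 := by omega
    have h2 : (Gp n k * (1 - X)).coeff (m+p) ≤ 0 := by
      rw [h1, hds]
      have := cdec (m+p-1) (by omega)
      omega
    omega
  have hchain : ∀ t : ℕ, ∀ m : ℕ, K + 2 ≤ 2*m → B.coeff (m + p*t) ≤ B.coeff m := by
    intro t
    induction t with
    | zero => intro m _; simp
    | succ t ih =>
      intro m hm
      have h1 : m + p*(t+1) = (m+p) + p*t := by ring
      rw [h1]
      exact le_trans (ih (m+p) (by omega)) (hbhigh_step m hm)
  have hbhigh : ∀ m : ℕ, K + 2 ≤ 2*m → 0 ≤ B.coeff m := by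
    intro m hm
    have hmul : B.natDegree + 1 ≤ p * (B.natDegree + 1) := Nat.le_mul_of_pos_left _ hp
    have hzero : B.coeff (m + p*(B.natDegree+1)) = 0 :=
      Polynomial.coeff_eq_zero_of_natDegree_lt (by omega)
    have := hchain (B.natDegree+1) m hm
    rw [hzero] at this
    exact this
  have hbnn : ∀ m, 0 ≤ B.coeff m := by
    intro m
    rcases le_or_gt (2*m) (K+1) with h | h
    · exact hblow m h
    · exact hbhigh m (by omega)
  have hAnn : ∀ m, 0 ≤ A.coeff m := by
    intro m
    have := hbnn (m + e)
    rwa [hBdef, Polynomial.coeff_X_pow_mul] at this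
  -- evaluate at 1
  have hgeom : (1 - X^p : Polynomial ℤ) = (∑ i ∈ range p, X^i) * (1 - X) := by
    have h := geom_sum_mul (X : Polynomial ℤ) p
    linear_combination h
  have hone : (1 - X : Polynomial ℤ) ≠ 0 := by
    intro h
    have h1 : (1 - X : Polynomial ℤ).coeff 1 = 0 := by rw [h]; simp
    rw [Polynomial.coeff_sub, Polynomial.coeff_one, Polynomial.coeff_X_one] at h1
    norm_num at h1
  have hfac : (A * (∑ i ∈ range p, X^i)) * (1 - X) = gaussBinom n k * (1 - X) := by
    rw [← hA, hgeom]; ring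
  have hcan : A * (∑ i ∈ range p, X^i) = gaussBinom n k := mul_right_cancel₀ hone hfac
  have heval : A.eval 1 * p = (n.choose k : ℤ) := by
    have h := congrArg (Polynomial.eval 1) hcan
    simp only [Polynomial.eval_mul, gauss_eval_one, Polynomial.eval_finset_sum,
      Polynomial.eval_pow, Polynomial.eval_X, one_pow, Finset.sum_const, Finset.card_range,
      nsmul_eq_mul, mul_one] at h
    exact h
  have hpart1 : (p : ℤ) * l1normP A = (n.choose k : ℤ) := by
    rw [l1_nonneg_eval A hAnn, mul_comm]
    exact heval
  refine ⟨hpart1, ?_⟩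
  have h2 : gaussBinom n k * (1 - X) = A - A * X^p := by rw [← hA]; ring
  rw [h2]
  have h3 := l1_sub_le A (A * X^p)
  rw [l1_mul_X_pow] at h3
  have hl1 : l1normP (A - A * X^p) ≤ 2 * l1normP A := by linarith
  calc (p:ℤ) * l1normP (A - A*X^p) ≤ (p:ℤ) * (2 * l1normP A) := by
        apply mul_le_mul_of_nonneg_left hl1 (by positivity)
    _ = 2 * ((p:ℤ) * l1normP A) := by ring
    _ = 2 * (n.choose k : ℤ) := by rw [hpart1]
end

section
/- (q-Vandermonde) For nonnegative integers m, n, k: [m+n choose k]_q = Σ_j [m choose k−j]_q · [n choose j]_q · q^{j(m−k+j)}, where the sum runs over max(0, k−m) ≤ j ≤ min(n, k). -/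
open scoped BigOperators
open Polynomial

lemma gaussBinom_succ_succ (n k : ℕ) :
    gaussBinom (n + 1) (k + 1) =
      gaussBinom n k + Polynomial.X ^ (k + 1) * gaussBinom n (k + 1) := by
  simp [gaussBinom]

lemma gaussBinom_eq_zero : ∀ n k : ℕ, n < k → gaussBinom n k = 0 := by
  intro n
  induction n with
  | zero =>
    intro k hk
    match k, hk with
    | k + 1, _ => simp [gaussBinom]
  | succ n ih =>
    intro k hk
    match k, hk with
    | k + 1, hk =>
      rw [gaussBinom_succ_succ, ih k (by omega), ih (k + 1) (by omega), mul_zero, add_zero]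

lemma gaussBinom_zero (n : ℕ) : gaussBinom n 0 = 1 := by
  cases n <;> simp [gaussBinom]

lemma term_eq (m n j k : ℕ) (hj : j ≤ k) :
    gaussBinom m (k - j) * gaussBinom n j * X ^ (j * (m + j - k))
      + X ^ (k + 1) * (gaussBinom m (k + 1 - j) * gaussBinom n j * X ^ (j * (m + j - (k + 1))))
    = gaussBinom (m + 1) (k + 1 - j) * gaussBinom n j * X ^ (j * (m + 1 + j - (k + 1))) := by
  have h1 : k + 1 - j = (k - j) + 1 := by omega
  have h2 : m + 1 + j - (k + 1) = m + j - k := by omega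
  rw [h1, h2, gaussBinom_succ_succ]
  rcases le_or_gt (k + 1) (m + j) with h | h
  · obtain ⟨t, ht⟩ : ∃ t, m + j = k + 1 + t := ⟨m + j - (k + 1), by omega⟩
    have e1 : m + j - k = t + 1 := by omega
    have e2 : m + j - (k + 1) = t := by omega
    rw [e1, e2, Nat.mul_succ]
    have e3 : k + 1 = ((k - j) + 1) + j := by omega
    rw [e3, pow_add, pow_add, pow_add]
    ring
  · rw [gaussBinom_eq_zero m ((k - j) + 1) (by omega)]
    ring

lemma q_vandermonde_range (m n : ℕ) : ∀ k, gaussBinom (m + n) k =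
    ∑ j ∈ Finset.range (k + 1),
      gaussBinom m (k - j) * gaussBinom n j * X ^ (j * (m + j - k)) := by
  induction m with
  | zero =>
    intro k
    rw [Finset.sum_eq_single k]
    · simp [gaussBinom]
    · intro b hb hbk
      simp only [Finset.mem_range] at hb
      rw [show k - b = (k - b - 1) + 1 by omega]
      simp [gaussBinom]
    · intro h
      simp at h
  | succ m ih =>
    intro k
    cases k with
    | zero => simp [gaussBinom]
    | succ k =>
      rw [show m + 1 + n = (m + n) + 1 by ring, gaussBinom_succ_succ, ih k, ih (k + 1),
        Finset.sum_range_succ (n := k + 1), Finset.sum_range_succ (n := k + 1),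
        mul_add, Finset.mul_sum, ← add_assoc, ← Finset.sum_add_distrib]
      congr 1
      · apply Finset.sum_congr rfl
        intro j hj
        simp only [Finset.mem_range] at hj
        exact term_eq m n j k (by omega)
      · simp only [Nat.sub_self, Nat.add_sub_cancel, gaussBinom_zero, one_mul,
          Nat.mul_succ, pow_add]
        ring

/-- q-Vandermonde identity:
`[m+n choose k]_q = Σ_{j=max(0,k−m)}^{min(n,k)} [m choose k−j]_q [n choose j]_q q^{j(m−k+j)}`. -/
theorem q_vandermonde (m n k : ℕ) :
    gaussBinom (m + n) k =
      ∑ j ∈ Finset.Icc (k - m) (min n k),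
        gaussBinom m (k - j) * gaussBinom n j * Polynomial.X ^ (j * (m + j - k)) := by
  rw [q_vandermonde_range m n k]
  refine (Finset.sum_subset ?_ ?_).symm
  · intro x hx
    simp only [Finset.mem_Icc, Finset.mem_range] at *
    omega
  · intro x hx hx'
    simp only [Finset.mem_Icc, Finset.mem_range, not_and_or, not_le] at hx hx'
    rcases hx' with h | h
    · rw [gaussBinom_eq_zero m (k - x) (by omega), zero_mul, zero_mul]
    · rw [gaussBinom_eq_zero n x (by omega), mul_zero, zero_mul]
end
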